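/- arXiv:1611.08421 — 2 statements merged into one kernel-verified Lean document; each statement's English description precedes it below -/
import Mathlib

section
/- Let F be a finite field of odd cardinality and let P ∈ F[X] be a monic irreducible self-dual polynomial (meaning P(0) ≠ 0 and P(X) = P(0)^{-1} X^{deg P} P(1/X)). Then either P(X) = X - 1, or P(X) = X + 1, or deg P is even. -/
open Polynomial

/-- An involution without fixed points on a finite set forces even cardinality. -/
lemma even_card_of_involution {α : Type*} [DecidableEq α] (S : Finset α) (f : α → α)
    (hmem : ∀ a ∈ S, f a ∈ S) (hinv : ∀ a ∈ S, f (f a) = a) (hne : ∀ a ∈ S, f a ≠ a) :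
    Even S.card := by
  induction S using Finset.strongInduction with
  | _ S ih =>
    rcases S.eq_empty_or_nonempty with rfl | ⟨a, ha⟩
    · simp
    · have hfa : f a ∈ S := hmem a ha
      have hne' : f a ≠ a := hne a ha
      set T := S \ {a, f a} with hT
      have hsubset : ({a, f a} : Finset α) ⊆ S := by
        simp [Finset.insert_subset_iff, ha, hfa]
      have hssub : T ⊂ S :=
        Finset.sdiff_ssubset hsubset (by simp)
      have hpair : ({a, f a} : Finset α).card = 2 := by
        rw [Finset.card_insert_of_notMem (by simp [Ne.symm hne'])]; simp
      have hTcard : T.card = S.card - 2 := by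
        rw [hT, Finset.card_sdiff_of_subset hsubset, hpair]
      have h2le : 2 ≤ S.card := by
        calc 2 = ({a, f a} : Finset α).card := hpair.symm
        _ ≤ S.card := Finset.card_le_card hsubset
      have hTmem : ∀ b ∈ T, f b ∈ T := by
        intro b hb
        rw [hT, Finset.mem_sdiff] at hb ⊢
        obtain ⟨hbS, hbne⟩ := hb
        simp only [Finset.mem_insert, Finset.mem_singleton] at hbne
        push_neg at hbne
        refine ⟨hmem b hbS, ?_⟩
        simp only [Finset.mem_insert, Finset.mem_singleton]
        push_neg
        constructor
        · intro h
          apply hbne.2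
          rw [← hinv b hbS, h]
        · intro h
          apply hbne.1
          rw [← hinv b hbS, h, hinv a ha]
      have hTeven : Even T.card :=
        ih T hssub hTmem (fun b hb => hinv b (hssub.subset hb))
          (fun b hb => hne b (hssub.subset hb))
      rw [Nat.even_iff] at hTeven ⊢
      omega

theorem stmt_7 (F : Type*) [Field F] [Fintype F] (hodd : Odd (Fintype.card F))
    (P : F[X]) (hmonic : P.Monic) (hirr : Irreducible P) (h0 : P.eval 0 ≠ 0)
    (hsd : P = C (P.eval 0)⁻¹ * P.reverse) :
    P = X - 1 ∨ P = X + 1 ∨ Even P.natDegree := by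
  classical
  set L := P.SplittingField
  set i := algebraMap F L with hi
  have hinj : Function.Injective i := i.injective
  have hsep : P.Separable := PerfectField.separable_of_irreducible hirr
  have hsplits : (P.map i).Splits := SplittingField.splits P
  set Q := P.map i with hQ
  have hQne : Q ≠ 0 := (Polynomial.map_ne_zero_iff hinj).mpr hmonic.ne_zero
  set S := Q.roots.toFinset with hS
  have hcard : S.card = P.natDegree := by
    rw [hS, Multiset.toFinset_card_of_nodup (nodup_roots hsep.map),
      ← hsplits.natDegree_eq_card_roots, natDegree_map]
  -- every root is nonzero
  have hroot_ne : ∀ β ∈ S, β ≠ 0 := by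
    intro β hβ hβ0
    rw [hS, Multiset.mem_toFinset, mem_roots hQne] at hβ
    subst hβ0
    have h' : Q.eval 0 = 0 := hβ
    rw [hQ, eval_map, eval₂_at_zero, coeff_zero_eq_eval_zero] at h'
    exact h0 (hinj (h'.trans (map_zero i).symm))
  -- the root set is closed under inversion
  have hmem : ∀ β ∈ S, β⁻¹ ∈ S := by
    intro β hβ
    have hβ0 : β ≠ 0 := hroot_ne β hβ
    rw [hS, Multiset.mem_toFinset, mem_roots hQne] at hβ ⊢
    have h1 : eval₂ i β P = 0 := by rw [← eval_map]; exact hβ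
    have h2 : eval₂ i β P.reverse = 0 := by
      have hcong := congrArg (eval₂ i β) hsd
      rw [eval₂_mul, eval₂_C, h1] at hcong
      have hne : i (P.eval 0)⁻¹ ≠ 0 := by
        simp only [ne_eq, _root_.map_eq_zero, inv_eq_zero]
        exact h0
      exact ((mul_eq_zero.mp hcong.symm).resolve_left hne)
    letI : Invertible β⁻¹ :=
      ⟨β, mul_inv_cancel₀ hβ0, inv_mul_cancel₀ hβ0⟩
    have h3 : eval₂ i β⁻¹ P = 0 := (eval₂_reverse_eq_zero_iff i β⁻¹ P).mp h2
    rw [IsRoot, hQ, eval_map]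
    exact h3
  by_cases hfix : ∃ β ∈ S, β⁻¹ = β
  · -- P has root 1 or -1, so P = X - 1 or P = X + 1
    obtain ⟨β, hβS, hββ⟩ := hfix
    have hβ0 : β ≠ 0 := hroot_ne β hβS
    have hmul : β * β = 1 := by
      nth_rewrite 1 [← hββ]
      exact inv_mul_cancel₀ hβ0
    have hsq : (β - 1) * (β + 1) = 0 := by linear_combination hmul
    have hpm : β = 1 ∨ β = -1 := by
      rcases mul_eq_zero.mp hsq with h | h
      · left; exact sub_eq_zero.mp h
      · right; exact eq_neg_of_add_eq_zero_left h
    have hβroot : Q.eval β = 0 := by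
      rw [hS, Multiset.mem_toFinset, mem_roots hQne] at hβS
      exact hβS
    rcases hpm with rfl | rfl
    · -- β = 1 : P = X - 1
      left
      have h1 : P.eval 1 = 0 := by
        apply hinj
        rw [map_zero, ← eval₂_at_apply i 1, map_one, ← eval_map]
        exact hβroot
      have hdeg : P.degree = 1 := degree_eq_one_of_irreducible_of_root hirr h1
      have hnat : P.natDegree = 1 := natDegree_eq_of_degree_eq_some hdeg
      have hP : P = X + C (P.coeff 0) := hmonic.eq_X_add_C hnat
      have hc : P.coeff 0 = -1 := by
        have := h1
        rw [hP] at this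
        simp at this
        linear_combination this
      rw [hP, hc]
      simp [sub_eq_add_neg]
    · -- β = -1 : P = X + 1
      right; left
      have h1 : P.eval (-1) = 0 := by
        apply hinj
        rw [map_zero, ← eval₂_at_apply i (-1), map_neg, map_one, ← eval_map]
        exact hβroot
      have hdeg : P.degree = 1 := degree_eq_one_of_irreducible_of_root hirr h1
      have hnat : P.natDegree = 1 := natDegree_eq_of_degree_eq_some hdeg
      have hP : P = X + C (P.coeff 0) := hmonic.eq_X_add_C hnat
      have hc : P.coeff 0 = 1 := by
        have := h1
        rw [hP] at this
        simp at this
        linear_combination this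
      rw [hP, hc]
      simp
  · push_neg at hfix
    right; right
    rw [← hcard]
    exact even_card_of_involution S (fun β => β⁻¹) hmem
      (fun β hβ => inv_inv β) hfix
end

section
/- Let F_q ⊂ F_{q^2} be finite fields of odd characteristic with [F_{q^2} : F_q] = 2, and let σ be the nontrivial element of Gal(F_{q^2}/F_q). Let P ∈ F_{q^2}[X] be a monic irreducible polynomial with P(0) ≠ 0 satisfying P(X) = σ(P(0))^{-1} X^{deg P} σ(P)(1/X), where σ(P) applies σ to all coefficients. Then deg P is odd. -/
open Polynomial

lemma exists_frobAlgEquiv (F E : Type*) [Field F] [Fintype F] [Field E] [Fintype E]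
    [Algebra F E] : ∃ ψ : E ≃ₐ[F] E, ∀ x, ψ x = x ^ Fintype.card F := by
  classical
  obtain ⟨p, hp⟩ := CharP.exists F
  haveI := hp
  obtain ⟨k, hpprime, hcardF⟩ := FiniteField.card F p
  haveI : Fact p.Prime := ⟨hpprime⟩
  haveI : CharP E p := charP_of_injective_algebraMap (algebraMap F E).injective p
  let f : E →+* E := iterateFrobenius E p k
  have hf : ∀ x : E, f x = x ^ Fintype.card F := fun x => by
    show iterateFrobenius E p k x = _
    rw [iterateFrobenius_def, hcardF]
  let g : E →ₐ[F] E :=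
    { toRingHom := f
      commutes' := fun a => by
        show f _ = _
        rw [hf, ← map_pow, FiniteField.pow_card] }
  have hinj : Function.Injective g := f.injective
  exact ⟨AlgEquiv.ofBijective g ⟨hinj, (Finite.injective_iff_bijective.mp hinj).2⟩,
    fun x => hf x⟩

lemma card_sub_one_dvd_of_forall_pow_eq (K : Type*) [Field K] [Fintype K] (c : ℕ) (hc : 1 ≤ c)
    (h : ∀ x : K, x ^ c = x) : Fintype.card K - 1 ∣ c - 1 := by
  classical
  obtain ⟨g, hg⟩ := IsCyclic.exists_generator (α := Kˣ)
  have hord : orderOf g = Fintype.card K - 1 := by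
    rw [orderOf_eq_card_of_forall_mem_zpowers hg, Nat.card_eq_fintype_card, Fintype.card_units]
  have hgc : g ^ c = g := Units.ext (by rw [Units.val_pow_eq_pow_val]; exact h g)
  have h1 : g ^ (c - 1) * g = g := by
    rw [← pow_succ, Nat.sub_add_cancel hc, hgc]
  have h2 : g ^ (c - 1) = 1 := by
    have h1' : g ^ (c - 1) * g = 1 * g := by rw [h1, one_mul]
    exact mul_right_cancel h1'
  rw [← hord]
  exact orderOf_dvd_of_pow_eq_one h2

lemma dvd_of_pow_sub_one_dvd {a n m : ℕ} (ha : 2 ≤ a) (hn : 1 ≤ n)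
    (h : a ^ n - 1 ∣ a ^ m - 1) : n ∣ m := by
  set N := a ^ n - 1 with hN
  have h1n : 1 ≤ a ^ n := Nat.one_le_pow _ _ (by omega)
  have h1m : 1 ≤ a ^ m := Nat.one_le_pow _ _ (by omega)
  have h1 : 1 ≡ a ^ n [MOD N] := (Nat.modEq_iff_dvd' h1n).mpr dvd_rfl
  have h2 : 1 ≡ a ^ m [MOD N] := (Nat.modEq_iff_dvd' h1m).mpr h
  have hm : m = n * (m / n) + m % n := (Nat.div_add_mod m n).symm
  have h3 : a ^ m ≡ a ^ (m % n) [MOD N] := by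
    calc a ^ m = (a ^ n) ^ (m / n) * a ^ (m % n) := by rw [← pow_mul, ← pow_add, ← hm]
    _ ≡ 1 ^ (m / n) * a ^ (m % n) [MOD N] := ((h1.symm.pow _).mul_right _)
    _ = a ^ (m % n) := by rw [one_pow, one_mul]
  have h4 : 1 ≡ a ^ (m % n) [MOD N] := h2.trans h3
  have h5 : N ∣ a ^ (m % n) - 1 :=
    (Nat.modEq_iff_dvd' (Nat.one_le_pow _ _ (by omega))).mp h4
  have hr : m % n = 0 := by
    by_contra hr0
    have hlt : a ^ (m % n) < a ^ n := Nat.pow_lt_pow_right ha (Nat.mod_lt _ (by omega))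
    have hpos : 0 < a ^ (m % n) - 1 := by
      have : 1 < a ^ (m % n) := Nat.one_lt_pow hr0 ha
      omega
    have := Nat.le_of_dvd hpos h5
    omega
  exact Nat.dvd_of_mod_eq_zero hr

open Polynomial

theorem stmt_8 (F E : Type*) [Field F] [Fintype F] [Field E] [Fintype E]
    [Algebra F E] (hodd : Odd (Fintype.card F))
    (hcard : Fintype.card E = Fintype.card F ^ 2)
    (σ : E ≃ₐ[F] E) (hσ : σ ≠ AlgEquiv.refl)
    (P : E[X]) (hmonic : P.Monic) (hirr : Irreducible P) (h0 : P.eval 0 ≠ 0)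
    (hsd : P = C (σ (P.eval 0))⁻¹ * (P.map (σ : E →+* E)).reverse) :
    Odd P.natDegree := by
  classical
  set q := Fintype.card F with hq
  have hq2 : 2 ≤ q := Fintype.one_lt_card
  -- σ is the Frobenius x ↦ x ^ q
  obtain ⟨ψ, hψ⟩ := exists_frobAlgEquiv F E
  have hrank : Module.finrank F E = 2 := by
    have hc := Module.card_eq_pow_finrank (K := F) (V := E)
    rw [hcard] at hc
    exact (Nat.pow_right_injective hq2 hc.symm)
  have hψne : ψ ≠ AlgEquiv.refl := by
    intro h
    have hall : ∀ x : E, x ^ q = x := fun x => by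
      have := hψ x; rw [h] at this; simpa using this.symm
    have hdvd := card_sub_one_dvd_of_forall_pow_eq E q (by omega) hall
    rw [hcard] at hdvd
    have hql : q * q ≥ 2 * q := Nat.mul_le_mul_right q hq2
    have hq2q : q ^ 2 = q * q := sq q
    have := Nat.le_of_dvd (by omega) hdvd
    omega
  have hσψ : σ = ψ := by
    by_contra hne
    have hcardAut : Fintype.card (E ≃ₐ[F] E) = 2 := by
      rw [← Nat.card_eq_fintype_card, IsGalois.card_aut_eq_finrank, hrank]
    have hsub : ({AlgEquiv.refl, σ, ψ} : Finset (E ≃ₐ[F] E)).card ≤ 2 := by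
      rw [← hcardAut]; exact Finset.card_le_univ _
    rw [Finset.card_insert_of_notMem (by simp [Ne.symm hσ, Ne.symm hψne]),
      Finset.card_insert_of_notMem (by simp [hne]), Finset.card_singleton] at hsub
    omega
  have hσ' : ∀ x : E, σ x = x ^ q := fun x => by rw [hσψ, hψ]
  -- setup for K = AdjoinRoot P
  set n := P.natDegree with hn
  have hP0 : P ≠ 0 := hmonic.ne_zero
  have hn1 : 1 ≤ n := hirr.natDegree_pos
  haveI : Fact (Irreducible P) := ⟨hirr⟩
  let K := AdjoinRoot P
  letI : Fintype K := Module.fintypeOfFintype (AdjoinRoot.powerBasis hP0).basis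
  have hrankK : Module.finrank E K = n := by
    rw [PowerBasis.finrank (AdjoinRoot.powerBasis hP0)]
    rfl
  have hcardK : Fintype.card K = (q ^ 2) ^ n := by
    rw [Module.card_eq_pow_finrank (K := E) (V := K), hrankK, hcard]
  obtain ⟨φ, hφ⟩ := exists_frobAlgEquiv E K
  have hφ' : ∀ x : K, φ x = x ^ q ^ 2 := fun x => by rw [hφ, hcard]
  have hφpow : ∀ (m : ℕ) (x : K), (φ ^ m) x = x ^ (q ^ 2) ^ m := by
    intro m
    induction m with
    | zero => intro x; simp
    | succ m ih =>
      intro x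
      rw [pow_succ, AlgEquiv.mul_apply, hφ' _, ih, ← pow_mul]
      congr 1
      rw [pow_succ]
      ring
  -- key divisibility lemma
  have key : ∀ m : ℕ, 1 ≤ m → (φ ^ m) (AdjoinRoot.root P) = AdjoinRoot.root P → n ∣ m := by
    intro m hm hroot
    have hid : φ ^ m = 1 := by
      have : ((φ ^ m : K ≃ₐ[E] K) : K →ₐ[E] K) = ((1 : K ≃ₐ[E] K) : K →ₐ[E] K) :=
        AdjoinRoot.algHom_ext (by simpa using hroot)
      ext x
      exact AlgHom.congr_fun this x
    have hall : ∀ x : K, x ^ (q ^ 2) ^ m = x := fun x => by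
      have := hφpow m x
      rw [hid] at this
      simpa using this.symm
    have hdvd := card_sub_one_dvd_of_forall_pow_eq K ((q ^ 2) ^ m)
      (Nat.one_le_pow _ _ (by positivity)) hall
    rw [hcardK] at hdvd
    exact dvd_of_pow_sub_one_dvd (by nlinarith) hn1 hdvd
  -- ζ and roots
  set ζ := AdjoinRoot.root P with hζ
  have hζroot : aeval ζ P = 0 := by
    rw [aeval_def, AdjoinRoot.algebraMap_eq]
    exact AdjoinRoot.eval₂_root P
  have hζ0 : ζ ≠ 0 := by
    intro h
    have h1 := hζroot
    rw [h, aeval_def, eval₂_at_zero] at h1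
    have h2 : P.coeff 0 = 0 := (algebraMap E K).injective (by simpa using h1)
    rw [coeff_zero_eq_eval_zero] at h2
    exact h0 h2
  -- roots are closed under x ↦ (x⁻¹)^q
  have hfrobK : ∃ f : K →+* K, ∀ x, f x = x ^ q := by
    obtain ⟨p, hp⟩ := CharP.exists F
    haveI := hp
    obtain ⟨k, hpprime, hcardF⟩ := FiniteField.card F p
    haveI : Fact p.Prime := ⟨hpprime⟩
    haveI : CharP E p := charP_of_injective_algebraMap (algebraMap F E).injective p
    haveI : CharP K p := charP_of_injective_algebraMap (algebraMap E K).injective p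
    exact ⟨iterateFrobenius K p k, fun x => by rw [iterateFrobenius_def, ← hcardF]⟩
  obtain ⟨fr, hfr⟩ := hfrobK
  have hclosed : ∀ x : K, x ≠ 0 → aeval x P = 0 → aeval ((x⁻¹) ^ q) P = 0 := by
    intro x hx hroot
    have hxq : x ^ q ≠ 0 := pow_ne_zero _ hx
    letI : Invertible (x ^ q) := invertibleOfNonzero hxq
    have hinv : ⅟ (x ^ q) = (x⁻¹) ^ q := by rw [invOf_eq_inv, inv_pow]
    have hcomp : (algebraMap E K).comp (σ : E →+* E) = fr.comp (algebraMap E K) := by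
      ext a
      simp [hσ' a, map_pow, hfr]
    have hrev : eval₂ (algebraMap E K) (⅟ (x ^ q)) ((P.map (σ : E →+* E)).reverse) = 0 := by
      rw [eval₂_reverse_eq_zero_iff, eval₂_map, hcomp, ← hfr x,
        ← Polynomial.hom_eval₂ _ _ _ x, ← aeval_def, hroot, map_zero]
    have hPeq := congrArg (fun p : E[X] => eval₂ (algebraMap E K) ((x⁻¹) ^ q) p) hsd
    rw [aeval_def, hPeq, eval₂_mul, eval₂_C, ← hinv, hrev, mul_zero]
  -- all φ^i ζ are roots
  have hconjroot : ∀ i : ℕ, aeval ((φ ^ i) ζ) P = 0 := by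
    intro i
    rw [Polynomial.aeval_algHom_apply (φ ^ i) ζ P, hζroot, map_zero]
  -- distinctness of conjugates
  have haux : ∀ i j, i ≤ j → j < n → (φ ^ i) ζ = (φ ^ j) ζ → i = j := by
    intro i j hij hj heq
    by_contra hne
    have hlt : i < j := lt_of_le_of_ne hij hne
    have h1 : (φ ^ i) ((φ ^ (j - i)) ζ) = (φ ^ i) ζ := by
      rw [← AlgEquiv.mul_apply, ← pow_add, show i + (j - i) = j by omega, ← heq]
    have h2 : (φ ^ (j - i)) ζ = ζ := (φ ^ i).injective h1
    have h3 := key (j - i) (by omega) h2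
    have := Nat.le_of_dvd (by omega) h3
    omega
  -- the roots finset
  set Pk := P.map (algebraMap E K) with hPk
  have hPk0 : Pk ≠ 0 := (hmonic.map _).ne_zero
  have hPkdeg : Pk.natDegree = n := hmonic.natDegree_map _
  have hmemS : ∀ x : K, x ∈ Pk.roots.toFinset ↔ aeval x P = 0 := by
    intro x
    rw [Multiset.mem_toFinset, mem_roots hPk0, IsRoot, hPk, eval_map, ← aeval_def]
  have hScard : Pk.roots.toFinset.card ≤ n :=
    le_trans (Multiset.toFinset_card_le _) (by rw [← hPkdeg]; exact Pk.card_roots')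
  set T := (Finset.range n).image (fun i => (φ ^ i) ζ) with hT
  have hTsub : T ⊆ Pk.roots.toFinset := by
    intro x hx
    rw [hT, Finset.mem_image] at hx
    obtain ⟨i, hi, rfl⟩ := hx
    exact (hmemS _).mpr (hconjroot i)
  have hTcard : T.card = n := by
    rw [hT, Finset.card_image_of_injOn, Finset.card_range]
    intro i hi j hj hij
    simp only [Finset.coe_range, Set.mem_Iio] at hi hj
    rcases le_total i j with h | h
    · exact haux i j h hj hij
    · exact (haux j i h hi hij.symm).symm
  have hTeq : T = Pk.roots.toFinset :=
    Finset.eq_of_subset_of_card_le hTsub (by rw [hTcard]; exact hScard)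
  -- (ζ⁻¹)^q is a root, hence a conjugate
  have hymem : ((ζ⁻¹) ^ q) ∈ T := by
    rw [hTeq]
    exact (hmemS _).mpr (hclosed ζ hζ0 hζroot)
  rw [hT, Finset.mem_image] at hymem
  obtain ⟨k, hk, hkeq⟩ := hymem
  rw [Finset.mem_range] at hk
  -- φ^(2k) ζ = φ ζ
  have h2k : (φ ^ (2 * k)) ζ = φ ζ := by
    have hsplit : (φ ^ (2 * k)) ζ = (φ ^ k) ((φ ^ k) ζ) := by
      rw [← AlgEquiv.mul_apply, ← pow_add, two_mul]
    rw [hsplit, hkeq, map_pow, map_inv₀, hkeq, ← inv_pow, inv_inv, ← pow_mul, hφ' ζ]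
    congr 1
    ring
  rcases Nat.eq_zero_or_pos k with hk0 | hk1
  · -- k = 0 : φ fixes ζ, so n = 1
    have hfix : (φ ^ 1) ζ = ζ := by
      rw [hk0] at h2k
      simp only [mul_zero, pow_zero, AlgEquiv.one_apply] at h2k
      rw [pow_one, ← h2k]
    have hdvd := key 1 le_rfl hfix
    have hn1' : n = 1 := Nat.dvd_one.mp hdvd
    rw [hn1']
    exact ⟨0, by omega⟩
  · -- k ≥ 1 : n divides the odd number 2k-1
    have hsucc : 2 * k - 1 + 1 = 2 * k := by omega
    have h1 : φ ((φ ^ (2 * k - 1)) ζ) = φ ζ := by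
      rw [← AlgEquiv.mul_apply, ← pow_succ', hsucc, h2k]
    have h2 : (φ ^ (2 * k - 1)) ζ = ζ := φ.injective h1
    have h3 : n ∣ 2 * k - 1 := key _ (by omega) h2
    rcases Nat.even_or_odd n with he | ho
    · exfalso
      obtain ⟨u, hu⟩ := he.two_dvd.trans h3
      omega
    · exact ho
end
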